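/- Let R be a commutative ring, let C be a commutative R-algebra that is a finitely generated free R-module, and let deg : C → R be an R-linear map. Let ρ : C ⊗_R C → End_R(C) be the R-linear map determined on pure tensors by ρ(a ⊗ b)(x) = deg(a·x)·b, let τ : C ⊗_R C → C ⊗_R C be the swap map a ⊗ b ↦ b ⊗ a, let the product on C ⊗_R C be the algebra tensor product multiplication, and let D = deg ⊗ deg : C ⊗_R C → R. Then for all φ, ψ ∈ C ⊗_R C one has D(φ · τ(ψ)) = trace(ρ(φ) ∘ ρ(ψ)), where trace denotes the trace of an R-linear endomorphism of the finitely generated free R-module C. -/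
import Mathlib


open TensorProduct

/-- Lemma 6.2 in the split situation: for correspondences `φ, ψ` on a split
variety with Chow ring `C`, `deg⊗deg (φ · ψᵗ) = tr(ρ(φ) ∘ ρ(ψ))`. -/
theorem deg_mul_transpose_eq_trace
    {R C : Type*} [CommRing R] [CommRing C] [Algebra R C]
    [Module.Finite R C] [Module.Free R C]
    (deg : C →ₗ[R] R)
    (ρ : C ⊗[R] C →ₗ[R] Module.End R C)
    (hρ : ∀ a b x : C, ρ (a ⊗ₜ[R] b) x = deg (a * x) • b)
    (D : C ⊗[R] C →ₗ[R] R)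
    (hD : ∀ a b : C, D (a ⊗ₜ[R] b) = deg a * deg b) :
    ∀ φ ψ : C ⊗[R] C,
      D (φ * (TensorProduct.comm R C C ψ)) = LinearMap.trace R C (ρ φ ∘ₗ ρ ψ) := by
  intro φ ψ
  induction φ using TensorProduct.induction_on with
  | zero => simp
  | add x y hx hy =>
      simp only [map_add, add_mul, LinearMap.add_comp] at *
      simp [hx, hy]
  | tmul a b =>
    induction ψ using TensorProduct.induction_on with
    | zero => simp
    | add x y hx hy =>
        simp only [map_add, mul_add, LinearMap.comp_add] at *
        simp [hx, hy]
    | tmul c d =>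
      simp only [TensorProduct.comm_tmul, Algebra.TensorProduct.tmul_mul_tmul, hD]
      have hcomp : ρ (a ⊗ₜ[R] b) ∘ₗ ρ (c ⊗ₜ[R] d)
          = deg (a * d) • dualTensorHom R C C ((deg ∘ₗ LinearMap.mulLeft R c) ⊗ₜ[R] b) := by
        ext x
        simp [hρ, dualTensorHom_apply, smul_smul, mul_smul_comm, mul_comm]
      rw [hcomp, map_smul]
      have h := congrArg (fun g => g ((deg ∘ₗ LinearMap.mulLeft R c) ⊗ₜ[R] b))
        (LinearMap.trace_eq_contract R C)
      simp only [LinearMap.coe_comp, Function.comp_apply, contractLeft_apply,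
        LinearMap.mulLeft_apply] at h
      rw [h]
      simp [mul_comm]
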